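/- Let q be a power of a prime, let n ≥ 2, let h(x) ∈ F_q[x] have degree n, and let L be any subfield of F_{q^n} containing the image h(F_{q^n}^×). Define S(x) = (1 − h(x)^{#L^×}) mod (x^{q^n−1} − 1) ∈ F_q[x], and write S(x) = Σ_{i=0}^{q^n−2} s_i x^i. If the cyclic sequence (s_i)_{i=0}^{q^n−2}, viewed as a function Z/(q^n−1)Z → F_q, has least period r with r not dividing (q^n−1)/Φ_n(q), then h(x) is irreducible over F_q. -/

import Mathlib

open scoped Classical

noncomputable section

/-- `g` is `r`-periodic on `Z/NZ`. -/
def IsPeriodOf {N : ℕ} {α : Type*} (g : ZMod N → α) (r : ℕ) : Prop :=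
  ∀ m : ZMod N, g (m + (r : ZMod N)) = g m

/-- `r` is the least period of `g`. -/
def IsLeastPeriod {N : ℕ} {α : Type*} (g : ZMod N → α) (r : ℕ) : Prop :=
  0 < r ∧ IsPeriodOf g r ∧ ∀ s : ℕ, 0 < s → IsPeriodOf g s → r ≤ s

open Polynomial IntermediateField

private lemma isPeriodOf_mul_nat {N : ℕ} {α : Type*} {g : ZMod N → α} {r : ℕ}
    (hp : IsPeriodOf g r) (k : ℕ) : ∀ m : ZMod N, g (m + ((r * k : ℕ) : ZMod N)) = g m := by
  induction k with
  | zero => intro m; simp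
  | succ k ih =>
    intro m
    have hcast : ((r * (k + 1) : ℕ) : ZMod N) = ((r * k : ℕ) : ZMod N) + ((r : ℕ) : ZMod N) := by
      push_cast; ring
    rw [hcast, ← add_assoc, hp (m + ((r * k : ℕ) : ZMod N))]
    exact ih m

private lemma IsLeastPeriod.dvd_of_isPeriodOf {N : ℕ} {α : Type*} {g : ZMod N → α} {r s : ℕ}
    (hr : IsLeastPeriod g r) (hs : IsPeriodOf g s) (hs0 : 0 < s) : r ∣ s := by
  obtain ⟨hr0, hrp, hmin⟩ := hr
  have hmod : IsPeriodOf g (s % r) := by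
    intro m
    have h1 : ((s : ℕ) : ZMod N) = ((s % r : ℕ) : ZMod N) + ((r * (s / r) : ℕ) : ZMod N) := by
      rw [← Nat.cast_add, Nat.mod_add_div]
    have h2 := isPeriodOf_mul_nat hrp (s / r) (m + ((s % r : ℕ) : ZMod N))
    rw [add_assoc, ← h1] at h2
    exact h2.symm.trans (hs m)
  rcases Nat.eq_zero_or_pos (s % r) with h0 | hpos
  · exact Nat.dvd_of_mod_eq_zero h0
  · have := hmin _ hpos hmod
    have hlt := Nat.mod_lt s hr0
    omega

theorem irreducible_of_leastPeriod_not_dvd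
    (q n : ℕ) (hn : 2 ≤ n)
    (Fq Fqn : Type) [Field Fq] [Fintype Fq] [Field Fqn] [Fintype Fqn]
    [Algebra Fq Fqn]
    (hq : Fintype.card Fq = q) (hqn : Fintype.card Fqn = q ^ n)
    [NeZero (q ^ n - 1)]
    (h : Polynomial Fq) (hdeg : h.natDegree = n) (L : Subfield Fqn)
    (hL : ∀ x : Fqn, x ≠ 0 → Polynomial.aeval x h ∈ L)
    (S : Polynomial Fq)
    (hS : S = (1 - h ^ Nat.card Lˣ) % (Polynomial.X ^ (q ^ n - 1) - 1))
    (r : ℕ)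
    (hr : IsLeastPeriod (fun i : ZMod (q ^ n - 1) => S.coeff i.val) r)
    (hdvd : ¬ r ∣ (q ^ n - 1) / ((Polynomial.cyclotomic n ℤ).eval (q : ℤ)).toNat) :
    Irreducible h := by
  classical
  by_contra hirr
  set N := q ^ n - 1 with hN
  haveI hNN : NeZero N := by rw [hN]; infer_instance
  have hq2 : 2 ≤ q := by rw [← hq]; exact Fintype.one_lt_card
  have hn0 : 0 < n := by omega
  have hqn1 : 1 ≤ q ^ n := Nat.one_le_pow _ _ (by omega)
  have hNpos : 0 < N := Nat.pos_of_ne_zero hNN.out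
  have hNsucc : N + 1 = q ^ n := by
    have : 2 ≤ q ^ n := by
      calc 2 ≤ q := hq2
      _ = q ^ 1 := (pow_one q).symm
      _ ≤ q ^ n := Nat.pow_le_pow_right (by omega) (by omega)
    omega
  -- cyclotomic value
  set Φz : ℤ := (Polynomial.cyclotomic n ℤ).eval (q : ℤ) with hΦz
  have hΦzpos : 0 < Φz := Polynomial.cyclotomic_pos' n (by exact_mod_cast hq2)
  set Φ : ℕ := Φz.toNat with hΦ
  have hΦcast : (Φ : ℤ) = Φz := Int.toNat_of_nonneg hΦzpos.le
  have hΦpos : 0 < Φ := by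
    have : (0 : ℤ) < (Φ : ℤ) := by rw [hΦcast]; exact hΦzpos
    exact_mod_cast this
  have hNcast : ((N : ℕ) : ℤ) = (q : ℤ) ^ n - 1 := by
    rw [hN, Nat.cast_sub hqn1, Nat.cast_pow, Nat.cast_one]
  have hΦdvdN : Φ ∣ N := by
    have hpoly := Polynomial.cyclotomic.dvd_X_pow_sub_one n ℤ
    have heval : Φz ∣ (q : ℤ) ^ n - 1 := by
      have := Polynomial.eval_dvd (x := (q : ℤ)) hpoly
      simpa using this
    have : (Φ : ℤ) ∣ ((N : ℕ) : ℤ) := by rw [hΦcast, hNcast]; exact heval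
    exact_mod_cast this
  set M := N / Φ with hM
  have hNM : N = Φ * M := (Nat.mul_div_cancel' hΦdvdN).symm
  have hMpos : 0 < M := Nat.div_pos (Nat.le_of_dvd hNpos hΦdvdN) hΦpos
  -- Lemma B
  have keyB : ∀ e : ℕ, 0 < e → e ∣ n → e < n → q ^ e - 1 ∣ M := by
    intro e he0 hedvd helt
    have hmem : e ∈ n.properDivisors := Nat.mem_properDivisors.mpr ⟨hedvd, helt⟩
    have hpoly := Polynomial.X_pow_sub_one_mul_cyclotomic_dvd_X_pow_sub_one_of_dvd ℤ hmem
    have heval : ((q : ℤ) ^ e - 1) * Φz ∣ (q : ℤ) ^ n - 1 := by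
      have := Polynomial.eval_dvd (x := (q : ℤ)) hpoly
      simpa using this
    have h1e : 1 ≤ q ^ e := Nat.one_le_pow _ _ (by omega)
    have hcast : (((q ^ e - 1) * Φ : ℕ) : ℤ) = ((q : ℤ) ^ e - 1) * Φz := by
      rw [Nat.cast_mul, Nat.cast_sub h1e, Nat.cast_pow, Nat.cast_one, hΦcast]
    have hnat : (q ^ e - 1) * Φ ∣ N := by
      have : (((q ^ e - 1) * Φ : ℕ) : ℤ) ∣ ((N : ℕ) : ℤ) := by
        rw [hcast, hNcast]; exact heval
      exact_mod_cast this
    have : (q ^ e - 1) * Φ ∣ M * Φ := by rw [mul_comm M Φ, ← hNM]; exact hnat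
    exact (Nat.mul_dvd_mul_iff_right hΦpos).mp this
  -- basic polynomial setup
  set c := Nat.card Lˣ with hc
  set A : Polynomial Fq := 1 - h ^ c with hA
  set D : Polynomial Fq := X ^ N - 1 with hD
  have hDmonic : D.Monic := by
    rw [hD]
    exact monic_X_pow_sub (by simpa using hNpos)
  have hSmod : S = A %ₘ D := by rw [hS, ← modByMonic_eq_mod A hDmonic]
  have hDdeg : D.degree = (N : WithBot ℕ) := by
    rw [hD]
    simpa using degree_X_pow_sub_C hNpos (1 : Fq)
  have hSdegree : S.degree < (N : WithBot ℕ) := by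
    rw [hSmod, ← hDdeg]; exact degree_modByMonic_lt A hDmonic
  have hSdeg : S.natDegree < N := by
    rcases eq_or_ne S 0 with h0 | h0
    · simpa [h0] using hNpos
    · exact natDegree_lt_iff_degree_lt h0 |>.mpr hSdegree
  -- factor h
  have hh0 : h ≠ 0 := by intro h0; rw [h0] at hdeg; simp at hdeg; omega
  have hhu : ¬ IsUnit h := by
    intro hu
    have := natDegree_eq_zero_of_isUnit hu
    omega
  have hdeg1 : ∀ p : Polynomial Fq, p ≠ 0 → ¬ IsUnit p → 1 ≤ p.natDegree := by
    intro p hp hpu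
    by_contra hlt
    push_neg at hlt
    have h0 : p.natDegree = 0 := by omega
    have hpC : p = C (p.coeff 0) := eq_C_of_natDegree_eq_zero h0
    apply hpu
    rw [hpC]
    exact isUnit_C.mpr (isUnit_iff_ne_zero.mpr (fun hc => hp (by rw [hpC, hc, map_zero])))
  obtain ⟨a, b, hab, hua, hub⟩ : ∃ a b : Polynomial Fq, h = a * b ∧ ¬IsUnit a ∧ ¬IsUnit b := by
    rw [irreducible_iff, not_and] at hirr
    have := hirr hhu
    push_neg at this
    obtain ⟨a, b, h1, h2, h3⟩ := this
    exact ⟨a, b, h1, h2, h3⟩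
  have ha0 : a ≠ 0 := fun h0 => hh0 (by rw [hab, h0, zero_mul])
  have hb0 : b ≠ 0 := fun h0 => hh0 (by rw [hab, h0, mul_zero])
  have hdegs : a.natDegree + b.natDegree = n := by
    rw [← hdeg, hab, natDegree_mul ha0 hb0]
  have ha1 := hdeg1 a ha0 hua
  have hb1 := hdeg1 b hb0 hub
  have hrank : Module.finrank Fq Fqn = n := by
    have hcard := Module.card_eq_pow_finrank (K := Fq) (V := Fqn)
    rw [hq, hqn] at hcard
    exact (Nat.pow_right_injective hq2 hcard.symm)
  -- roots of h in Fqn^× satisfy α^M = 1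
  have hroot : ∀ α : Fqn, α ≠ 0 → Polynomial.aeval α h = 0 → α ^ M = 1 := by
    intro α hα0 hαh
    have hab' : Polynomial.aeval α a * Polynomial.aeval α b = 0 := by
      rw [← map_mul, ← hab, hαh]
    obtain ⟨p, hp0, hpdeg, hpa⟩ :
        ∃ p : Polynomial Fq, p ≠ 0 ∧ p.natDegree < n ∧ Polynomial.aeval α p = 0 := by
      rcases mul_eq_zero.mp hab' with hc | hc
      · exact ⟨a, ha0, by omega, hc⟩
      · exact ⟨b, hb0, by omega, hc⟩
    have hint : IsIntegral Fq α := IsIntegral.of_finite Fq α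
    have hmple : (minpoly Fq α).natDegree ≤ p.natDegree :=
      natDegree_le_natDegree (minpoly.degree_le_of_ne_zero Fq α hp0 hpa)
    set K := Fq⟮α⟯ with hK
    have hefin : Module.finrank Fq K = (minpoly Fq α).natDegree :=
      IntermediateField.adjoin.finrank hint
    set e := Module.finrank Fq K with he
    have hedvd : e ∣ n :=
      ⟨Module.finrank K Fqn, by rw [← hrank, ← Module.finrank_mul_finrank Fq K Fqn]⟩
    have helt : e < n := by rw [hefin]; omega
    have he0 : 0 < e := Module.finrank_pos
    haveI : Fintype K := Fintype.ofFinite K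
    have hcardK : Fintype.card K = q ^ e := by
      rw [Module.card_eq_pow_finrank (K := Fq) (V := K), hq, he]
    set x : K := IntermediateField.AdjoinSimple.gen Fq α with hx
    have hxcoe : algebraMap K Fqn x = α := rfl
    have hx0 : x ≠ 0 := by
      intro h0
      apply hα0
      rw [← hxcoe, h0, map_zero]
    have hone := FiniteField.pow_card_sub_one_eq_one x hx0
    have hαe : α ^ (q ^ e - 1) = 1 := by
      apply_fun (algebraMap K Fqn) at hone
      rwa [map_pow, map_one, hxcoe, hcardK] at hone
    obtain ⟨t, ht⟩ := keyB e he0 hedvd helt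
    rw [ht, pow_mul, hαe, one_pow]
  -- α^N = 1 for nonzero α
  have hαN : ∀ α : Fqn, α ≠ 0 → α ^ N = 1 := by
    intro α hα0
    have := FiniteField.pow_card_sub_one_eq_one α hα0
    rwa [hqn] at this
  -- evaluation of S at nonzero α
  have hSval : ∀ α : Fqn, α ≠ 0 →
      Polynomial.aeval α S = 1 - (Polynomial.aeval α h) ^ c := by
    intro α hα0
    have hAd := modByMonic_add_div A D
    have : Polynomial.aeval α S = Polynomial.aeval α A
        - Polynomial.aeval α D * Polynomial.aeval α (A /ₘ D) := by
      rw [hSmod]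
      have := congrArg (Polynomial.aeval α) hAd
      rw [map_add, map_mul] at this
      linear_combination this
    rw [this]
    have hDα : Polynomial.aeval α D = 0 := by
      rw [hD, map_sub, map_pow, aeval_X, map_one, hαN α hα0, sub_self]
    rw [hDα, zero_mul, sub_zero, hA, map_sub, map_one, map_pow]
  -- the key divisibility
  have hdvdPoly : D ∣ S * (X ^ M - 1) := by
    rw [← map_dvd_map (algebraMap Fq Fqn) (algebraMap Fq Fqn).injective hDmonic]
    -- X^N - 1 over Fqn as a product over nonzero elements
    have hXne : (X : Polynomial Fqn) ≠ 0 := X_ne_zero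
    have hmonic2 : ((X : Polynomial Fqn) ^ (q ^ n) - X).Monic := by
      apply monic_X_pow_sub
      rw [degree_X]
      exact_mod_cast Nat.one_lt_pow (by omega) hq2
    have hrootscard : Multiset.card ((X : Polynomial Fqn) ^ (q ^ n) - X).roots
        = ((X : Polynomial Fqn) ^ (q ^ n) - X).natDegree := by
      rw [← hqn, FiniteField.roots_X_pow_card_sub_X,
        FiniteField.X_pow_card_sub_X_natDegree_eq Fqn Fintype.one_lt_card]
      simp [Finset.card_univ]
    have hprodall : ((X : Polynomial Fqn) ^ (q ^ n) - X)
        = ∏ a : Fqn, (X - C a) := by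
      have := prod_multiset_X_sub_C_of_monic_of_roots_card_eq hmonic2 hrootscard
      rw [← this, ← hqn, FiniteField.roots_X_pow_card_sub_X]
      rfl
    have hprod : ((X : Polynomial Fqn) ^ N - 1)
        = ∏ a ∈ Finset.univ.erase (0 : Fqn), (X - C a) := by
      apply mul_left_cancel₀ hXne
      calc (X : Polynomial Fqn) * (X ^ N - 1) = X ^ (N + 1) - X := by ring
        _ = X ^ (q ^ n) - X := by rw [hNsucc]
        _ = ∏ a : Fqn, (X - C a) := hprodall
        _ = (X - C 0) * ∏ a ∈ Finset.univ.erase (0 : Fqn), (X - C a) :=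
            (Finset.mul_prod_erase _ _ (Finset.mem_univ 0)).symm
        _ = X * ∏ a ∈ Finset.univ.erase (0 : Fqn), (X - C a) := by rw [map_zero, sub_zero]
    have hmapD : D.map (algebraMap Fq Fqn) = (X : Polynomial Fqn) ^ N - 1 := by
      rw [hD, Polynomial.map_sub, Polynomial.map_pow, map_X, Polynomial.map_one]
    rw [hmapD, hprod]
    apply Finset.prod_dvd_of_coprime
    · intro u hu v hv huv
      exact pairwise_coprime_X_sub_C Function.injective_id huv
    · intro α hα
      have hα0 : α ≠ 0 := Finset.ne_of_mem_erase hα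
      rw [dvd_iff_isRoot, IsRoot.def, eval_map, ← aeval_def, map_mul, map_sub, map_pow,
        aeval_X, map_one, hSval α hα0]
      by_cases hαh : Polynomial.aeval α h = 0
      · rw [hroot α hα0 hαh, sub_self, mul_zero]
      · have hmem := hL α hα0
        set u : Lˣ := Units.mk0 ⟨Polynomial.aeval α h, hmem⟩
          (by simp [Subtype.ext_iff, hαh]) with hu
        have huc : u ^ c = 1 := by rw [hc]; exact pow_card_eq_one'
        have : (Polynomial.aeval α h) ^ c = 1 := by
          have := congrArg (fun w : Lˣ => ((w : L) : Fqn)) huc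
          simpa [hu] using this
        rw [this, sub_self, zero_mul]
  -- the combinatorial part : S = T
  set T : Polynomial Fq := ∑ j ∈ Finset.range N, C (S.coeff j) * X ^ ((j + M) % N) with hT
  have hXmod : ∀ t : ℕ, D ∣ (X : Polynomial Fq) ^ t - X ^ (t % N) := by
    intro t
    have hdvd1 : D ∣ ((X : Polynomial Fq) ^ N) ^ (t / N) - 1 := by
      simpa [hD] using sub_dvd_pow_sub_pow ((X : Polynomial Fq) ^ N) 1 (t / N)
    have heq : (X : Polynomial Fq) ^ (t % N) * (((X : Polynomial Fq) ^ N) ^ (t / N) - 1)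
        = X ^ t - X ^ (t % N) := by
      rw [mul_sub, mul_one, ← pow_mul, ← pow_add, Nat.mod_add_div]
    rw [← heq]
    exact (hdvd1).mul_left _
  have hSsum : S = ∑ j ∈ Finset.range N, C (S.coeff j) * X ^ j := by
    conv_lhs => rw [S.as_sum_range' N hSdeg]
    exact Finset.sum_congr rfl fun j _ => (C_mul_X_pow_eq_monomial).symm
  have hdvd2 : D ∣ S * X ^ M - T := by
    have hSX : S * X ^ M = ∑ j ∈ Finset.range N, C (S.coeff j) * X ^ (j + M) := by
      conv_lhs => rw [hSsum]
      rw [Finset.sum_mul]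
      exact Finset.sum_congr rfl fun j _ => by rw [mul_assoc, ← pow_add]
    have hrw : S * X ^ M - T
        = ∑ j ∈ Finset.range N, C (S.coeff j) * ((X : Polynomial Fq) ^ (j + M) - X ^ ((j + M) % N)) := by
      rw [hSX, hT, ← Finset.sum_sub_distrib]
      exact Finset.sum_congr rfl fun j _ => by rw [mul_sub]
    rw [hrw]
    exact Finset.dvd_sum fun j _ => ((hXmod (j + M)).mul_left _)
  have hdvd3 : D ∣ S * X ^ M - S := by
    have : S * (X ^ M - 1) = S * X ^ M - S := by ring
    rw [← this]; exact hdvdPoly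
  have hdvdTS : D ∣ T - S := by
    have : T - S = (S * X ^ M - S) - (S * X ^ M - T) := by ring
    rw [this]
    exact dvd_sub hdvd3 hdvd2
  have hTdeg : T.degree < (N : WithBot ℕ) := by
    rw [hT]
    apply lt_of_le_of_lt (degree_sum_le _ _)
    rw [Finset.sup_lt_iff (by exact_mod_cast WithBot.bot_lt_coe N)]
    intro j hj
    apply lt_of_le_of_lt (degree_C_mul_X_pow_le _ _)
    exact_mod_cast Nat.mod_lt _ hNpos
  have hST : T = S := by
    have hz : T - S = 0 := by
      apply eq_zero_of_dvd_of_degree_lt hdvdTS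
      rw [hDdeg]
      exact lt_of_le_of_lt (degree_sub_le T S) (max_lt hTdeg hSdegree)
    linear_combination hz
  -- periodicity with period M
  have hcoeff : ∀ k : ℕ, k < N → T.coeff ((k + M) % N) = S.coeff k := by
    intro k hk
    have hzero : ∀ j ∈ Finset.range N, j ≠ k →
        (C (S.coeff j) * X ^ ((j + M) % N)).coeff ((k + M) % N) = 0 := by
      intro j hj hne
      have hjlt : j < N := Finset.mem_range.mp hj
      have hne2 : (k + M) % N ≠ (j + M) % N := by
        intro heq
        apply hne
        have hmodeq : j + M ≡ k + M [MOD N] := by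
          unfold Nat.ModEq
          omega
        have h2 := Nat.ModEq.add_right_cancel' M hmodeq
        unfold Nat.ModEq at h2
        rwa [Nat.mod_eq_of_lt hjlt, Nat.mod_eq_of_lt hk] at h2
      rw [coeff_C_mul, coeff_X_pow, if_neg hne2, mul_zero]
    rw [hT, finset_sum_coeff, Finset.sum_eq_single_of_mem k (Finset.mem_range.mpr hk) hzero,
      coeff_C_mul, coeff_X_pow, if_pos rfl, mul_one]
  have hper : IsPeriodOf (fun i : ZMod N => S.coeff i.val) M := by
    intro m
    show S.coeff ((m + (M : ZMod N)).val) = S.coeff m.val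
    have hmlt : m.val < N := ZMod.val_lt m
    have hval : (m + (M : ZMod N)).val = (m.val + M) % N := by
      rw [ZMod.val_add, ZMod.val_natCast, Nat.add_mod m.val M N,
        Nat.mod_eq_of_lt hmlt]
    rw [hval]
    calc S.coeff ((m.val + M) % N) = T.coeff ((m.val + M) % N) := by rw [hST]
      _ = S.coeff m.val := hcoeff m.val hmlt
  exact hdvd (hr.dvd_of_isPeriodOf hper hMpos)

end
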